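/- The matrix I - (I - P)·X^{-1} has determinant 1, hence is invertible, and W := (I - (I - P)·X^{-1})^{-1} satisfies: (I - P)·(I - X^{-1})·W = I - P, P·W = P, and (Σ_{i=0}^{m-1} X^i)·X·P = W·P·(Σ_{i=0}^{m-1} X^i)·X·P. -/

import Mathlib

open Matrix Finset
open Fin.NatCast Fin.CommRing
lemma cpow_entry (m : ℕ) (hm : 1 < m) (t : ℂ)
    (C : Matrix (Fin m) (Fin m) ℂ)
    (hC : ∀ i j : Fin m, C i j =
      if (i : ℕ) + 1 = (j : ℕ) then 1
      else if (i : ℕ) = m - 1 ∧ (j : ℕ) = 0 then t else 0) :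
    ∀ (k : ℕ) (i j : Fin m), (C ^ k) i j =
      if (j : ℕ) = ((i : ℕ) + k) % m then t ^ (((i : ℕ) + k) / m) else 0 := by
  have hm0 : 0 < m := by omega
  intro k
  induction k with
  | zero =>
    intro i j
    simp [Matrix.one_apply, Nat.mod_eq_of_lt i.isLt, Nat.div_eq_of_lt i.isLt,
      Fin.ext_iff, eq_comm]
  | succ k ih =>
    intro i j
    rw [pow_succ, Matrix.mul_apply]
    set q := ((i : ℕ) + k) / m with hq
    set r := ((i : ℕ) + k) % m with hr
    clear_value q r
    have hrm : r < m := hr ▸ Nat.mod_lt _ hm0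
    have hqr : m * q + r = (i : ℕ) + k := by rw [hq, hr]; exact Nat.div_add_mod _ _
    rw [Finset.sum_eq_single (⟨r, hrm⟩ : Fin m)]
    · rw [ih i ⟨r, hrm⟩, if_pos hr, hC, ← hq]
      by_cases hcase : r = m - 1
      · have hmq : m * (q + 1) = m * q + m := by ring
        have h1 : (i : ℕ) + (k + 1) = m * (q + 1) := by omega
        have h2 : ((i : ℕ) + (k + 1)) % m = 0 := by rw [h1]; exact Nat.mul_mod_right _ _
        have h3 : ((i : ℕ) + (k + 1)) / m = q + 1 := by
          rw [h1]; exact Nat.mul_div_cancel_left _ hm0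
        rw [h2, h3]
        have hne : ¬ (((⟨r, hrm⟩ : Fin m) : ℕ) + 1 = (j : ℕ)) := by
          simp only [Fin.val_mk]; have := j.isLt; omega
        rw [if_neg hne]
        by_cases hj0 : (j : ℕ) = 0
        · rw [if_pos (show ((⟨r, hrm⟩ : Fin m) : ℕ) = m - 1 ∧ (j : ℕ) = 0 from ⟨hcase, hj0⟩),
            if_pos hj0, pow_succ]
        · rw [if_neg (fun h => hj0 h.2), if_neg hj0, mul_zero]
      · have h1 : (i : ℕ) + (k + 1) = (r + 1) + m * q := by omega
        have hr1 : r + 1 < m := by omega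
        have h2 : ((i : ℕ) + (k + 1)) % m = r + 1 := by
          rw [h1, Nat.add_mul_mod_self_left, Nat.mod_eq_of_lt hr1]
        have h3 : ((i : ℕ) + (k + 1)) / m = q := by
          rw [h1, Nat.add_mul_div_left _ _ hm0, Nat.div_eq_of_lt hr1, Nat.zero_add]
        rw [h2, h3]
        by_cases hj : r + 1 = (j : ℕ)
        · rw [if_pos hj, if_pos hj.symm, mul_one]
        · rw [if_neg hj, if_neg (by omega : ¬((r:ℕ) = m - 1 ∧ (j:ℕ) = 0)), mul_zero,
            if_neg (fun h => hj h.symm)]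
    · intro l _ hl
      rw [ih i l, if_neg (by rw [← hr]; simpa [Fin.ext_iff] using hl), zero_mul]
    · intro h; exact absurd (Finset.mem_univ _) h

/-- `det (I - (I - P) X⁻¹) = 1`, hence invertible, and `W := (I - (I - P) X⁻¹)⁻¹`
satisfies `(I - P)(I - X⁻¹) W = I - P`, `P W = P`, and
`(Σ_{i<m} X^i) X P = W P (Σ_{i<m} X^i) X P`. -/
theorem stmt_10 (m n : ℕ) (hm : 1 < m) (hn : 1 < n) (hmn : Nat.Coprime m n)
    (t : ℂ) (ht0 : t ≠ 0)
    (b : Fin m → ℤ) (hb : (n : ℤ) ∣ ∑ i, b i)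
    (a : ℤ) (ha : ¬ (n : ℤ) ∣ a)
    (C X P W : Matrix (Fin m) (Fin m) ℂ)
    (hC : ∀ i j : Fin m, C i j =
      if (i : ℕ) + 1 = (j : ℕ) then 1
      else if (i : ℕ) = m - 1 ∧ (j : ℕ) = 0 then t else 0)
    (hX : X = C ^ n)
    (hP : P = Matrix.diagonal (fun i => if (n : ℤ) ∣ (b i + a) then 0 else 1))
    (hW : W = (1 - (1 - P) * X⁻¹)⁻¹) :
    (1 - (1 - P) * X⁻¹).det = 1 ∧
    IsUnit (1 - (1 - P) * X⁻¹) ∧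
    (1 - P) * (1 - X⁻¹) * W = 1 - P ∧
    P * W = P ∧
    (∑ i ∈ Finset.range m, X ^ i) * X * P =
      W * P * (∑ i ∈ Finset.range m, X ^ i) * X * P := by
  obtain ⟨m', rfl⟩ : ∃ k, m = k + 2 := ⟨m - 2, by omega⟩
  have hm0 : 0 < (m' + 2) := by omega
  -- C^(m' + 2) = t • 1
  have hCpow := cpow_entry (m' + 2) hm t C hC
  have hCm : C ^ (m' + 2) = t • (1 : Matrix (Fin (m' + 2)) (Fin (m' + 2)) ℂ) := by
    ext i j
    rw [hCpow (m' + 2) i j]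
    have h1 : ((i : ℕ) + (m' + 2)) % (m' + 2) = (i : ℕ) := by
      rw [Nat.add_mod_right, Nat.mod_eq_of_lt i.isLt]
    have h2 : ((i : ℕ) + (m' + 2)) / (m' + 2) = 1 := by
      rw [Nat.add_div_right _ hm0, Nat.div_eq_of_lt i.isLt]
    rw [h1, h2, pow_one, Matrix.smul_apply, Matrix.one_apply]
    by_cases hij : i = j
    · rw [if_pos (by rw [hij]), if_pos hij, smul_eq_mul, mul_one]
    · rw [if_neg (fun h => hij (Fin.ext h.symm)), if_neg hij, smul_zero]
  -- X^(m' + 2) is a scalar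
  have hXm : X ^ (m' + 2) = (t ^ n) • (1 : Matrix (Fin (m' + 2)) (Fin (m' + 2)) ℂ) := by
    rw [hX, ← pow_mul, mul_comm, pow_mul, hCm, _root_.smul_pow, one_pow]
  -- X is invertible
  have hXdet : IsUnit X.det := by
    rw [isUnit_iff_ne_zero]
    intro h
    have : (X ^ (m' + 2)).det = 0 := by rw [det_pow, h, zero_pow (by omega)]
    rw [hXm, det_smul, det_one, mul_one, Fintype.card_fin] at this
    exact (pow_ne_zero _ (pow_ne_zero _ ht0)) this
  have hXinv : X * X⁻¹ = 1 := mul_nonsing_inv X hXdet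
  have hXinv' : X⁻¹ * X = 1 := nonsing_inv_mul X hXdet
  -- commutation of diagonal matrices past C
  have hCne : ∀ i j : Fin (m' + 2), C i j ≠ 0 → j = i + 1 := by
    intro i j h
    rw [hC] at h
    have hv1 : ((1 : Fin (m' + 2)) : ℕ) = 1 := by
      rw [Fin.val_one']; exact Nat.mod_eq_of_lt hm
    split_ifs at h with h1 h2
    · apply Fin.ext
      rw [Fin.val_add, hv1, Nat.mod_eq_of_lt (by have := j.isLt; omega)]
      omega
    · apply Fin.ext
      rw [Fin.val_add, hv1, h2.2, h2.1]
      have : m' + 2 - 1 + 1 = (m' + 2) := by omega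
      rw [this, Nat.mod_self]
    · exact absurd rfl h
  have hswap : ∀ f : Fin (m' + 2) → ℂ,
      diagonal (fun i => f (i + 1)) * C = C * diagonal f := by
    intro f
    ext i j
    rw [diagonal_mul, mul_diagonal]
    by_cases hc : C i j = 0
    · rw [hc, mul_zero, zero_mul]
    · rw [hCne i j hc, mul_comm]
  have hck : ∀ (k : ℕ) (f : Fin (m' + 2) → ℂ),
      diagonal (fun i => f (i + (k : Fin (m' + 2)))) * C ^ k = C ^ k * diagonal f := by
    intro k
    induction k with
    | zero => intro f; simp
    | succ k ih =>
      intro f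
      have hfun : (fun i => f (i + ((k + 1 : ℕ) : Fin (m' + 2))))
          = fun i => (fun z => f (z + (k : Fin (m' + 2)))) (i + 1) := by
        funext i
        push_cast
        ring_nf
      rw [hfun, pow_succ', ← mul_assoc, hswap (fun z => f (z + (k : Fin (m' + 2)))), mul_assoc, ih, ← mul_assoc]
  -- move diagonal matrices past X⁻¹
  have hdf : ∀ f : Fin (m' + 2) → ℂ,
      diagonal f * X⁻¹ = X⁻¹ * diagonal (fun i => f (i + (n : Fin (m' + 2)))) := by
    intro f
    have h := hck n f
    rw [← hX] at h
    calc diagonal f * X⁻¹ = X⁻¹ * X * diagonal f * X⁻¹ := by rw [hXinv', one_mul]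
    _ = X⁻¹ * (diagonal (fun i => f (i + (n : Fin (m' + 2)))) * X) * X⁻¹ := by
        rw [mul_assoc X⁻¹ X, h, ← mul_assoc]
    _ = X⁻¹ * diagonal (fun i => f (i + (n : Fin (m' + 2)))) * (X * X⁻¹) := by
        noncomm_ring
    _ = X⁻¹ * diagonal (fun i => f (i + (n : Fin (m' + 2)))) := by rw [hXinv, mul_one]
  -- the diagonal entries of 1 - P
  set d : Fin (m' + 2) → ℂ := fun i => if (n : ℤ) ∣ (b i + a) then 1 else 0 with hd
  have hD : 1 - P = diagonal d := by
    rw [hP, ← diagonal_one, diagonal_sub]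
    apply congrArg
    funext i
    show 1 - (if (n : ℤ) ∣ b i + a then (0 : ℂ) else 1)
        = if (n : ℤ) ∣ b i + a then (1 : ℂ) else 0
    split_ifs <;> ring
  -- the power formula for N = (1-P) X⁻¹
  set N : Matrix (Fin (m' + 2)) (Fin (m' + 2)) ℂ := diagonal d * X⁻¹ with hN
  have hNk : ∀ k : ℕ, N ^ k = (X⁻¹) ^ k *
      diagonal (fun i => ∏ j ∈ Finset.range k, d (i + (((j + 1) * n : ℕ) : Fin (m' + 2)))) := by
    intro k
    induction k with
    | zero => simp
    | succ k ih =>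
      rw [pow_succ, ih, hN, ← mul_assoc, mul_assoc ((X⁻¹) ^ k), diagonal_mul_diagonal,
        mul_assoc, hdf, ← mul_assoc, ← pow_succ]
      congr 1
      apply congrArg
      funext i
      rw [Finset.prod_range_succ']
      have h0 : (((0 + 1) * n : ℕ) : Fin (m' + 2)) = ((n : ℕ) : Fin (m' + 2)) := by norm_num
      rw [h0]
      congr 1
      apply Finset.prod_congr rfl
      intro j _
      congr 1
      push_cast
      ring
  -- an index where d vanishes
  obtain ⟨i₀, hi₀⟩ : ∃ i : Fin (m' + 2), ¬ (n : ℤ) ∣ (b i + a) := by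
    by_contra hall
    push_neg at hall
    have h1 : (n : ℤ) ∣ ∑ i : Fin (m' + 2), (b i + a) := Finset.dvd_sum (fun i _ => hall i)
    rw [Finset.sum_add_distrib, Finset.sum_const, Finset.card_univ, Fintype.card_fin,
      nsmul_eq_mul] at h1
    have h2 : (n : ℤ) ∣ ((m' + 2) : ℤ) * a := (dvd_add_right hb).mp h1
    have h3 : IsCoprime (n : ℤ) ((m' + 2) : ℤ) := Nat.isCoprime_iff_coprime.mpr hmn.symm
    exact ha (h3.dvd_of_dvd_mul_left h2)
  have hdi₀ : d i₀ = 0 := by rw [hd]; simp [hi₀]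
  -- modular inverse of n
  set u : ℕ := ((n : ZMod (m' + 2))⁻¹).val with hu
  have hnu : n * u ≡ 1 [MOD (m' + 2)] := by
    rw [← ZMod.natCast_eq_natCast_iff]
    push_cast
    rw [hu, ZMod.natCast_val, ZMod.cast_id]
    exact ZMod.coe_mul_inv_eq_one n hmn.symm
  -- hitting i₀
  have hexj : ∀ i : Fin (m' + 2), ∃ j ∈ Finset.range (m' + 2),
      i + (((j + 1) * n : ℕ) : Fin (m' + 2)) = i₀ := by
    intro i
    set v : ℕ := (i₀ : ℕ) + ((m' + 2) - (i : ℕ)) with hv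
    set s : ℕ := (v * u) % (m' + 2) with hs
    have hsM : s < (m' + 2) := Nat.mod_lt _ hm0
    set k : ℕ := if s = 0 then (m' + 2) else s with hk
    have hk1 : 1 ≤ k ∧ k ≤ (m' + 2) := by rw [hk]; split <;> omega
    refine ⟨k - 1, Finset.mem_range.mpr (by omega), ?_⟩
    have hks : k ≡ s [MOD (m' + 2)] := by
      rw [hk]; split
      · rename_i h; rw [h]; exact (Nat.modEq_zero_iff_dvd).mpr dvd_rfl
      · rfl
    have hmain : (i : ℕ) + k * n ≡ (i₀ : ℕ) [MOD (m' + 2)] := by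
      calc (i : ℕ) + k * n ≡ (i : ℕ) + s * n [MOD (m' + 2)] :=
            Nat.ModEq.add_left _ (hks.mul_right n)
      _ ≡ (i : ℕ) + v * (n * u) [MOD (m' + 2)] := by
            rw [hs]
            have : v * u % (m' + 2) * n ≡ v * u * n [MOD (m' + 2)] := (Nat.mod_modEq _ _).mul_right n
            have h2 : v * u * n = v * (n * u) := by ring
            exact Nat.ModEq.add_left _ (by rw [← h2]; exact this)
      _ ≡ (i : ℕ) + v * 1 [MOD (m' + 2)] := Nat.ModEq.add_left _ (Nat.ModEq.mul_left v hnu)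
      _ = (i₀ : ℕ) + (m' + 2) := by rw [mul_one, hv]; have := i.isLt; omega
      _ ≡ (i₀ : ℕ) [MOD (m' + 2)] := Nat.add_modEq_right
    apply Fin.ext
    have hk1' : k - 1 + 1 = k := by omega
    rw [Fin.val_add, Fin.val_natCast, hk1']
    have hmm : ((i : ℕ) + k * n % (m' + 2)) ≡ (i : ℕ) + k * n [MOD (m' + 2)] :=
      Nat.ModEq.add_left _ (Nat.mod_modEq _ _)
    have := hmm.trans hmain
    rw [Nat.ModEq] at this
    rw [this, Nat.mod_eq_of_lt i₀.isLt]
  -- N is nilpotent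
  have hNM : N ^ (m' + 2) = 0 := by
    rw [hNk (m' + 2)]
    have : (fun i => ∏ j ∈ Finset.range (m' + 2), d (i + (((j + 1) * n : ℕ) : Fin (m' + 2))))
        = fun _ => (0 : ℂ) := by
      funext i
      obtain ⟨j, hjmem, hj⟩ := hexj i
      exact Finset.prod_eq_zero hjmem (by rw [hj, hdi₀])
    rw [this, diagonal_zero, mul_zero]
  have hnil : IsNilpotent N := ⟨(m' + 2), hNM⟩
  -- determinant of 1 - N
  have hchar : N.charpoly = Polynomial.X ^ (m' + 2) := by
    have h := (Matrix.isNilpotent_charpoly_sub_pow_of_isNilpotent hnil).eq_zero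
    rw [sub_eq_zero] at h
    rw [h, Fintype.card_fin]
  have hdet1 : (1 - N).det = 1 := by
    have heval : N.charpoly.eval 1 = (1 - N).det := by
      rw [Matrix.charpoly, eval_det, matPolyEquiv_charmatrix]
      simp
    rw [← heval, hchar]
    simp
  -- put the pieces together
  have hNP : (1 - P) * X⁻¹ = N := by rw [hD, hN]
  rw [hNP] at hW ⊢
  have hunit : IsUnit (1 - N) := by
    rw [Matrix.isUnit_iff_isUnit_det, hdet1]; exact isUnit_one
  have hdet1' : IsUnit (1 - N).det := by rw [hdet1]; exact isUnit_one
  have hWl : (1 - N) * W = 1 := by rw [hW]; exact mul_nonsing_inv _ hdet1'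
  have hWr : W * (1 - N) = 1 := by rw [hW]; exact nonsing_inv_mul _ hdet1'
  have hPN : P * N = 0 := by
    rw [hP, hN, ← mul_assoc, diagonal_mul_diagonal]
    have hfun : (fun i => (if (n : ℤ) ∣ b i + a then (0 : ℂ) else 1) * d i)
        = fun _ => (0 : ℂ) := by
      funext i
      by_cases h : (n : ℤ) ∣ b i + a
      · simp [h]
      · simp [hd, h]
    rw [hfun, diagonal_zero, zero_mul]
  have h1PP : (1 - P) * P = 0 := by
    rw [hD, hP, diagonal_mul_diagonal]
    have hfun : (fun i => d i * (if (n : ℤ) ∣ b i + a then (0 : ℂ) else 1))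
        = fun _ => (0 : ℂ) := by
      funext i
      by_cases h : (n : ℤ) ∣ b i + a
      · simp [hd, h]
      · simp [hd, h]
    rw [hfun, diagonal_zero]
  have hPA : P * (1 - N) = P := by rw [mul_sub, mul_one, hPN, sub_zero]
  have hPW : P * W = P := by
    calc P * W = P * (1 - N) * W := by rw [hPA]
    _ = P * ((1 - N) * W) := by rw [mul_assoc]
    _ = P := by rw [hWl, mul_one]
  have hNW : N * W = W - 1 := by
    have h : W - N * W = 1 := by rw [← hWl]; noncomm_ring
    have h2 : N * W + 1 = W := by rw [← h]; abel
    exact eq_sub_iff_add_eq.mpr h2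
  have hclaim3 : (1 - P) * (1 - X⁻¹) * W = 1 - P := by
    have expand : (1 - P) * (1 - X⁻¹) = (1 - P) - N := by
      rw [mul_sub, mul_one, hNP]
    rw [expand, sub_mul, sub_mul, one_mul, hPW, hNW]
    abel
  -- claim 5
  set S : Matrix (Fin (m' + 2)) (Fin (m' + 2)) ℂ := ∑ i ∈ Finset.range (m' + 2), X ^ i
    with hS
  have hcomm5 : X * S = S * X := by
    rw [hS, Finset.mul_sum, Finset.sum_mul]
    exact Finset.sum_congr rfl fun i _ => ((pow_succ' X i).symm.trans (pow_succ X i))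
  have hgeom : (1 - X⁻¹) * (S * X) = (t ^ n) • 1 - 1 := by
    have h1 : X⁻¹ * (S * X) = S := by rw [← hcomm5, ← mul_assoc, hXinv', one_mul]
    rw [sub_mul, one_mul, h1, ← hXm, ← geom_sum_mul, hS]
    noncomm_ring
  have h2 : (1 - P) * (1 - X⁻¹) * (S * X * P) = 0 := by
    calc (1 - P) * (1 - X⁻¹) * (S * X * P)
        = (1 - P) * ((1 - X⁻¹) * (S * X)) * P := by noncomm_ring
    _ = (1 - P) * ((t ^ n) • 1 - 1) * P := by rw [hgeom]
    _ = (t ^ n) • ((1 - P) * P) - (1 - P) * P := by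
        rw [mul_sub, sub_mul, mul_smul_comm, smul_mul_assoc, mul_one]
    _ = 0 := by rw [h1PP, smul_zero, sub_zero]
  have hkey : (1 - N) * (S * X * P) = P * (S * X * P) := by
    have h3 : ((1 - N) - P) * (S * X * P) = 0 := by
      have h4 : (1 - N) - P = (1 - P) * (1 - X⁻¹) := by
        rw [mul_sub, mul_one, hNP]; abel
      rw [h4, h2]
    rw [sub_mul] at h3
    exact sub_eq_zero.mp h3
  have E : S * X * P = W * (P * (S * X * P)) := by
    calc S * X * P = (W * (1 - N)) * (S * X * P) := by rw [hWr, one_mul]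
    _ = W * ((1 - N) * (S * X * P)) := by rw [mul_assoc]
    _ = W * (P * (S * X * P)) := by rw [hkey]
  refine ⟨hdet1, hunit, hclaim3, hPW, ?_⟩
  rw [E]
  simp only [mul_assoc]
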